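/- Upper bound on the Hessian of the loss (Lemma C.2): Let c_α > 0. Under activation assumption (i) and with training data satisfying ‖x_i‖₂ = ‖y_i‖₂ = 1 for all i, for all L sufficiently large (depending only on c_α and d) and all weights α with ‖α‖_{F,∞} ≤ c_α L^{-1/2}, the Hessian of J_L (viewed as a symmetric bilinear form on ℝ^{L·d·d}) satisfies ‖∇²_α J_L(α)‖₂ ≤ 5 d e^{4.3 c_α}, where ‖·‖₂ is the operator (spectral) norm. -/

import Mathlib

open Finset

noncomputable section

/-- Euclidean norm of a vector in `ℝ^d`. -/
def vnorm {d : ℕ} (v : Fin d → ℝ) : ℝ := Real.sqrt (∑ i, v i ^ 2)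

/-- Frobenius norm of a `d × d` real matrix. -/
def frobNorm {d : ℕ} (A : Fin d → Fin d → ℝ) : ℝ := Real.sqrt (∑ i, ∑ j, A i j ^ 2)

/-- Matrix-vector product. -/
def mulVec' {d : ℕ} (A : Fin d → Fin d → ℝ) (v : Fin d → ℝ) : Fin d → ℝ :=
  fun i => ∑ j, A i j * v j

/-- Matrix-matrix product. -/
def matMul' {d : ℕ} (A B : Fin d → Fin d → ℝ) : Fin d → Fin d → ℝ :=
  fun i j => ∑ l, A i l * B l j

/-- Hidden states of the residual network: `h_0 = x` and
`h_{k+1} = h_k + L^{-1/2} σ_d(α_{k+1} h_k)`, where the weight of the (1-based)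
layer `k+1` is stored at the (0-based) index `k`. -/
def hiddenState {d L : ℕ} (σ : ℝ → ℝ) (α : Fin L → Fin d → Fin d → ℝ) (x : Fin d → ℝ) :
    ℕ → Fin d → ℝ
  | 0 => x
  | k + 1 =>
      if h : k < L then
        fun i => hiddenState σ α x k i + (Real.sqrt L)⁻¹ * σ (mulVec' (α ⟨k, h⟩) (hiddenState σ α x k) i)
      else hiddenState σ α x k

/-- One factor `I_d + L^{-1/2} diag(σ'(α_{k+1} h_k)) α_{k+1}` of the layer-to-output
Jacobian (0-based index `k`). -/
def layerJac {d L : ℕ} (σ : ℝ → ℝ) (α : Fin L → Fin d → Fin d → ℝ) (x : Fin d → ℝ)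
    (k : ℕ) (h : k < L) : Fin d → Fin d → ℝ :=
  fun i i' => (if i = i' then (1 : ℝ) else 0) +
    (Real.sqrt L)⁻¹ * deriv σ (mulVec' (α ⟨k, h⟩) (hiddenState σ α x k) i) * α ⟨k, h⟩ i i'

/-- Layer-to-output Jacobian `M_k^x(α) = ∂h_L/∂h_k`, where `k` is the 1-based
paper index, `0 ≤ k ≤ L`. -/
def jacM {d L : ℕ} (σ : ℝ → ℝ) (α : Fin L → Fin d → Fin d → ℝ) (x : Fin d → ℝ) :
    ℕ → Fin d → Fin d → ℝ
  | k =>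
      if h : k < L then matMul' (jacM σ α x (k + 1)) (layerJac σ α x k h)
      else fun i i' => if i = i' then 1 else 0
  termination_by k => L - k
  decreasing_by omega

/-- Mean-squared training loss `J_L`. -/
def loss {d L N : ℕ} (σ : ℝ → ℝ) (x y : Fin N → Fin d → ℝ)
    (α : Fin L → Fin d → Fin d → ℝ) : ℝ :=
  (1 / (2 * N)) * ∑ i, ∑ j, (y i j - hiddenState σ α (x i) L j) ^ 2

/-- Partial derivative of the loss with respect to the `(m,n)` entry of the
`k`-th weight matrix. -/
def gradEntry {d L N : ℕ} (σ : ℝ → ℝ) (x y : Fin N → Fin d → ℝ)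
    (α : Fin L → Fin d → Fin d → ℝ) (k : Fin L) (m n : Fin d) : ℝ :=
  fderiv ℝ (loss σ x y) α (Pi.single k (Pi.single m (Pi.single n 1)))

/-- `G_k^{x,y}(α) = (M_k^x(α))ᵀ (ŷ(x,α) − y)`; `k` is the 1-based paper index. -/
def Gvec {d L : ℕ} (σ : ℝ → ℝ) (α : Fin L → Fin d → Fin d → ℝ) (x y : Fin d → ℝ)
    (k : ℕ) : Fin d → ℝ :=
  fun n => ∑ j, jacM σ α x k j n * (hiddenState σ α x L j - y j)

/-- Assumption (i) on the activation function: `σ ∈ C²`, `σ'(0) = 1`, and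
`|σ(z)| ≤ |z|`, `|σ'(z)| ≤ 1`, `|σ''(z)| ≤ 1` for all `z`. -/
def ActAssump (σ : ℝ → ℝ) : Prop :=
  ContDiff ℝ 2 σ ∧ deriv σ 0 = 1 ∧
    ∀ z : ℝ, |σ z| ≤ |z| ∧ |deriv σ z| ≤ 1 ∧ |deriv (deriv σ) z| ≤ 1

lemma vnorm_nonneg {d : ℕ} (v : Fin d → ℝ) : 0 ≤ vnorm v := Real.sqrt_nonneg _
lemma frobNorm_nonneg {d : ℕ} (A : Fin d → Fin d → ℝ) : 0 ≤ frobNorm A := Real.sqrt_nonneg _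

lemma vnorm_le_of_sq_le_sq {d : ℕ} {v : Fin d → ℝ} {c : ℝ} (hc : 0 ≤ c)
    (h : ∑ i, v i ^ 2 ≤ c ^ 2) : vnorm v ≤ c := by
  have := Real.sqrt_le_sqrt h
  rwa [Real.sqrt_sq hc] at this

lemma sq_vnorm {d : ℕ} (v : Fin d → ℝ) : vnorm v ^ 2 = ∑ i, v i ^ 2 :=
  Real.sq_sqrt (by positivity)

lemma vnorm_mono {d : ℕ} {a b : Fin d → ℝ} (h : ∀ i, |a i| ≤ b i) : vnorm a ≤ vnorm b := by
  apply Real.sqrt_le_sqrt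
  apply Finset.sum_le_sum
  intro i _
  calc a i ^ 2 = |a i| ^ 2 := (sq_abs _).symm
  _ ≤ b i ^ 2 := by have := h i; nlinarith [abs_nonneg (a i)]

lemma abs_dot_le {d : ℕ} (a b : Fin d → ℝ) : |∑ i, a i * b i| ≤ vnorm a * vnorm b := by
  have h := Finset.sum_mul_sq_le_sq_mul_sq univ a b
  have h2 : |∑ i, a i * b i| = Real.sqrt ((∑ i, a i * b i) ^ 2) := (Real.sqrt_sq_eq_abs _).symm
  rw [h2, vnorm, vnorm, ← Real.sqrt_mul (by positivity)]
  exact Real.sqrt_le_sqrt h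

lemma vnorm_add_le {d : ℕ} (a b : Fin d → ℝ) : vnorm (fun i => a i + b i) ≤ vnorm a + vnorm b := by
  apply vnorm_le_of_sq_le_sq (add_nonneg (vnorm_nonneg a) (vnorm_nonneg b))
  have hdot : ∑ i, a i * b i ≤ vnorm a * vnorm b := le_trans (le_abs_self _) (abs_dot_le a b)
  have ha := sq_vnorm a; have hb := sq_vnorm b
  have h3 : ∑ i, (a i + b i) ^ 2 = (∑ i, a i ^ 2) + 2 * (∑ i, a i * b i) + ∑ i, b i ^ 2 := by
    simp only [add_sq]
    rw [Finset.sum_add_distrib, Finset.sum_add_distrib, Finset.mul_sum]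
    congr 1; congr 1; exact Finset.sum_congr rfl fun i _ => by ring
  rw [h3]; nlinarith [vnorm_nonneg a, vnorm_nonneg b]

lemma vnorm_mulVec_le {d : ℕ} (A : Fin d → Fin d → ℝ) (v : Fin d → ℝ) :
    vnorm (mulVec' A v) ≤ frobNorm A * vnorm v := by
  apply vnorm_le_of_sq_le_sq (mul_nonneg (frobNorm_nonneg A) (vnorm_nonneg v))
  have hrow : ∀ i : Fin d, (mulVec' A v i) ^ 2 ≤ (∑ j, A i j ^ 2) * ∑ j, v j ^ 2 :=
    fun i => Finset.sum_mul_sq_le_sq_mul_sq univ (A i) v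
  calc ∑ i, mulVec' A v i ^ 2 ≤ ∑ i, (∑ j, A i j ^ 2) * ∑ j, v j ^ 2 :=
        Finset.sum_le_sum fun i _ => hrow i
  _ = (∑ i, ∑ j, A i j ^ 2) * ∑ j, v j ^ 2 := by rw [Finset.sum_mul]
  _ = (frobNorm A * vnorm v) ^ 2 := by
      rw [mul_pow, frobNorm, vnorm, Real.sq_sqrt (by positivity), Real.sq_sqrt (by positivity)]

lemma vnorm_const_mul {d : ℕ} (c : ℝ) (a : Fin d → ℝ) :
    vnorm (fun i => c * a i) = |c| * vnorm a := by
  unfold vnorm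
  rw [← Real.sqrt_sq_eq_abs, ← Real.sqrt_mul (by positivity), Finset.mul_sum]
  congr 1
  exact Finset.sum_congr rfl fun i _ => by ring

lemma vnorm_mul_le {d : ℕ} (a b : Fin d → ℝ) :
    vnorm (fun i => a i * b i) ≤ vnorm a * vnorm b := by
  apply vnorm_le_of_sq_le_sq (mul_nonneg (vnorm_nonneg a) (vnorm_nonneg b))
  rw [mul_pow, sq_vnorm, sq_vnorm, Finset.sum_mul]
  apply Finset.sum_le_sum
  intro i _
  rw [mul_pow]
  have h1 : b i ^ 2 ≤ ∑ j, b j ^ 2 :=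
    Finset.single_le_sum (fun j _ => sq_nonneg (b j)) (Finset.mem_univ i)
  nlinarith [sq_nonneg (a i)]

/-- Directional derivative of the hidden state at weights `β` in weight-direction `v`. -/
def du {d L : ℕ} (σ : ℝ → ℝ) (β v : Fin L → Fin d → Fin d → ℝ) (x : Fin d → ℝ) :
    ℕ → Fin d → ℝ
  | 0 => fun _ => 0
  | k + 1 =>
      if h : k < L then
        fun i => du σ β v x k i + (Real.sqrt L)⁻¹ *
          (deriv σ (mulVec' (β ⟨k, h⟩) (hiddenState σ β x k) i) *
            (mulVec' (β ⟨k, h⟩) (du σ β v x k) i + mulVec' (v ⟨k, h⟩) (hiddenState σ β x k) i))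
      else du σ β v x k

/-- Second mixed directional derivative of the hidden state at `α` in directions `v, w`. -/
def dp {d L : ℕ} (σ : ℝ → ℝ) (α v w : Fin L → Fin d → Fin d → ℝ) (x : Fin d → ℝ) :
    ℕ → Fin d → ℝ
  | 0 => fun _ => 0
  | k + 1 =>
      if h : k < L then
        fun i =>
          dp σ α v w x k i + (Real.sqrt L)⁻¹ *
            (deriv (deriv σ) (mulVec' (α ⟨k, h⟩) (hiddenState σ α x k) i) *
                (mulVec' (α ⟨k, h⟩) (du σ α w x k) i + mulVec' (w ⟨k, h⟩) (hiddenState σ α x k) i) *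
                (mulVec' (α ⟨k, h⟩) (du σ α v x k) i + mulVec' (v ⟨k, h⟩) (hiddenState σ α x k) i)
              + deriv σ (mulVec' (α ⟨k, h⟩) (hiddenState σ α x k) i) *
                (mulVec' (α ⟨k, h⟩) (dp σ α v w x k) i + mulVec' (w ⟨k, h⟩) (du σ α v x k) i
                  + mulVec' (v ⟨k, h⟩) (du σ α w x k) i))
      else dp σ α v w x k

lemma hs_succ {d L : ℕ} (σ : ℝ → ℝ) (α : Fin L → Fin d → Fin d → ℝ) (x : Fin d → ℝ)
    {k : ℕ} (h : k < L) (i : Fin d) :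
    hiddenState σ α x (k+1) i = hiddenState σ α x k i +
      (Real.sqrt L)⁻¹ * σ (mulVec' (α ⟨k, h⟩) (hiddenState σ α x k) i) := by
  rw [hiddenState, dif_pos h]

lemma du_succ {d L : ℕ} (σ : ℝ → ℝ) (β v : Fin L → Fin d → Fin d → ℝ) (x : Fin d → ℝ)
    {k : ℕ} (h : k < L) (i : Fin d) :
    du σ β v x (k+1) i = du σ β v x k i + (Real.sqrt L)⁻¹ *
      (deriv σ (mulVec' (β ⟨k, h⟩) (hiddenState σ β x k) i) *
        (mulVec' (β ⟨k, h⟩) (du σ β v x k) i + mulVec' (v ⟨k, h⟩) (hiddenState σ β x k) i)) := by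
  rw [du, dif_pos h]

lemma dp_succ {d L : ℕ} (σ : ℝ → ℝ) (α v w : Fin L → Fin d → Fin d → ℝ) (x : Fin d → ℝ)
    {k : ℕ} (h : k < L) (i : Fin d) :
    dp σ α v w x (k+1) i =
      dp σ α v w x k i + (Real.sqrt L)⁻¹ *
        (deriv (deriv σ) (mulVec' (α ⟨k, h⟩) (hiddenState σ α x k) i) *
            (mulVec' (α ⟨k, h⟩) (du σ α w x k) i + mulVec' (w ⟨k, h⟩) (hiddenState σ α x k) i) *
            (mulVec' (α ⟨k, h⟩) (du σ α v x k) i + mulVec' (v ⟨k, h⟩) (hiddenState σ α x k) i)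
          + deriv σ (mulVec' (α ⟨k, h⟩) (hiddenState σ α x k) i) *
            (mulVec' (α ⟨k, h⟩) (dp σ α v w x k) i + mulVec' (w ⟨k, h⟩) (du σ α v x k) i
              + mulVec' (v ⟨k, h⟩) (du σ α w x k) i)) := by
  rw [dp, dif_pos h]

lemma line_zero {d L : ℕ} (β v : Fin L → Fin d → Fin d → ℝ) : β + (0:ℝ) • v = β := by
  simp

/-- Lemma A: derivative of the hidden state along a weight line. -/
lemma hasDerivAt_hs {d L : ℕ} {σ : ℝ → ℝ} (hσ : ContDiff ℝ 2 σ)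
    (β v : Fin L → Fin d → Fin d → ℝ) (x : Fin d → ℝ) :
    ∀ (k : ℕ) (i : Fin d),
      HasDerivAt (fun s : ℝ => hiddenState σ (β + s • v) x k i) (du σ β v x k i) 0 := by
  have hσ1 : ∀ z, HasDerivAt σ (deriv σ z) z := fun z =>
    ((hσ.differentiable (by norm_num)) z).hasDerivAt
  intro k
  induction k with
  | zero =>
    intro i
    simpa [hiddenState, du] using hasDerivAt_const (0:ℝ) (x i)
  | succ k ih =>
    intro i
    by_cases h : k < L
    · -- inner argument of σ
      have hterm : ∀ j : Fin d, HasDerivAt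
          (fun s : ℝ => ((β + s • v) ⟨k, h⟩ i j) * hiddenState σ (β + s • v) x k j)
          (v ⟨k, h⟩ i j * hiddenState σ β x k j + β ⟨k, h⟩ i j * du σ β v x k j) 0 := by
        intro j
        have h1 : HasDerivAt (fun s : ℝ => (β + s • v) ⟨k, h⟩ i j) (v ⟨k, h⟩ i j) 0 := by
          simp only [Pi.add_apply, Pi.smul_apply, smul_eq_mul]
          simpa using ((hasDerivAt_id (0:ℝ)).mul_const (v ⟨k, h⟩ i j)).const_add (β ⟨k, h⟩ i j)
        have := h1.fun_mul (ih j)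
        simpa [line_zero] using this
      have hinner : HasDerivAt
          (fun s : ℝ => mulVec' ((β + s • v) ⟨k, h⟩) (hiddenState σ (β + s • v) x k) i)
          (mulVec' (v ⟨k, h⟩) (hiddenState σ β x k) i + mulVec' (β ⟨k, h⟩) (du σ β v x k) i) 0 := by
        have := HasDerivAt.fun_sum (fun j (_ : j ∈ univ) => hterm j)
        simpa [mulVec', Finset.sum_add_distrib] using this
      have hσc : HasDerivAt
          (fun s : ℝ => σ (mulVec' ((β + s • v) ⟨k, h⟩) (hiddenState σ (β + s • v) x k) i))
          (deriv σ (mulVec' (β ⟨k, h⟩) (hiddenState σ β x k) i) *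
            (mulVec' (v ⟨k, h⟩) (hiddenState σ β x k) i + mulVec' (β ⟨k, h⟩) (du σ β v x k) i)) 0 := by
        have hz := hσ1 (mulVec' ((β + (0:ℝ) • v) ⟨k, h⟩) (hiddenState σ (β + (0:ℝ) • v) x k) i)
        have hc := hz.comp (0:ℝ) hinner
        simp only [line_zero] at hc
        simpa [Function.comp_def] using hc
      have htot := (ih i).fun_add (hσc.const_mul ((Real.sqrt L)⁻¹))
      have heq : (fun s : ℝ => hiddenState σ (β + s • v) x (k+1) i) =
          fun s : ℝ => hiddenState σ (β + s • v) x k i +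
            (Real.sqrt L)⁻¹ * σ (mulVec' ((β + s • v) ⟨k, h⟩) (hiddenState σ (β + s • v) x k) i) := by
        funext s; exact hs_succ σ _ x h i
      rw [heq, du_succ σ β v x h i]
      refine htot.congr_deriv ?_
      ring
    · have heq : (fun s : ℝ => hiddenState σ (β + s • v) x (k+1) i) =
          fun s : ℝ => hiddenState σ (β + s • v) x k i := by
        funext s; rw [hiddenState, dif_neg h]
      rw [heq, du, dif_neg h]
      exact ih i

lemma deriv_sigma_hasDerivAt {σ : ℝ → ℝ} (hσ : ContDiff ℝ 2 σ) (z : ℝ) :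
    HasDerivAt (deriv σ) (deriv (deriv σ) z) z := by
  have h' : ContDiff ℝ ((1:ℕ)+1) σ := by exact_mod_cast hσ
  have h2 : ContDiff ℝ 1 (deriv σ) := by exact_mod_cast (contDiff_succ_iff_deriv.mp h').2.2
  exact ((h2.differentiable one_ne_zero) z).hasDerivAt

/-- generic derivative of `t ↦ mulVec' ((α+t•w) p) (g t) i` at `t = 0`. -/
lemma hasDerivAt_mulVec_line {d L : ℕ} (α w : Fin L → Fin d → Fin d → ℝ) (p : Fin L) (i : Fin d)
    (g : ℝ → Fin d → ℝ) (g' : Fin d → ℝ) (hg : ∀ j, HasDerivAt (fun t => g t j) (g' j) 0) :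
    HasDerivAt (fun t : ℝ => mulVec' ((α + t • w) p) (g t) i)
      (mulVec' (w p) (g 0) i + mulVec' (α p) g' i) 0 := by
  have hterm : ∀ j : Fin d, HasDerivAt
      (fun t : ℝ => ((α + t • w) p i j) * g t j)
      (w p i j * g 0 j + α p i j * g' j) 0 := by
    intro j
    have h1 : HasDerivAt (fun t : ℝ => (α + t • w) p i j) (w p i j) 0 := by
      simp only [Pi.add_apply, Pi.smul_apply, smul_eq_mul]
      simpa using ((hasDerivAt_id (0:ℝ)).mul_const (w p i j)).const_add (α p i j)
    simpa using h1.fun_mul (hg j)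
  have := HasDerivAt.fun_sum (fun j (_ : j ∈ univ) => hterm j)
  simpa [mulVec', Finset.sum_add_distrib] using this

lemma hasDerivAt_mulVec_const {d : ℕ} (A : Fin d → Fin d → ℝ) (i : Fin d)
    (g : ℝ → Fin d → ℝ) (g' : Fin d → ℝ) (hg : ∀ j, HasDerivAt (fun t => g t j) (g' j) 0) :
    HasDerivAt (fun t : ℝ => mulVec' A (g t) i) (mulVec' A g' i) 0 := by
  have hterm : ∀ j : Fin d, HasDerivAt (fun t : ℝ => A i j * g t j) (A i j * g' j) 0 :=
    fun j => (hg j).const_mul (A i j)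
  have := HasDerivAt.fun_sum (fun j (_ : j ∈ univ) => hterm j)
  simpa [mulVec'] using this

/-- Lemma B: derivative of `du` along the weight line in direction `w`. -/
lemma hasDerivAt_du {d L : ℕ} {σ : ℝ → ℝ} (hσ : ContDiff ℝ 2 σ)
    (α v w : Fin L → Fin d → Fin d → ℝ) (x : Fin d → ℝ) :
    ∀ (k : ℕ) (i : Fin d),
      HasDerivAt (fun t : ℝ => du σ (α + t • w) v x k i) (dp σ α v w x k i) 0 := by
  have hσ1 : ∀ z, HasDerivAt σ (deriv σ z) z := fun z =>
    ((hσ.differentiable (by norm_num)) z).hasDerivAt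
  intro k
  induction k with
  | zero =>
    intro i
    simpa [du, dp] using hasDerivAt_const (0:ℝ) (0:ℝ)
  | succ k ih =>
    intro i
    by_cases h : k < L
    · -- derivative of the argument of σ (same as in hasDerivAt_hs, direction w)
      have hZ : HasDerivAt
          (fun t : ℝ => mulVec' ((α + t • w) ⟨k, h⟩) (hiddenState σ (α + t • w) x k) i)
          (mulVec' (w ⟨k, h⟩) (hiddenState σ α x k) i + mulVec' (α ⟨k, h⟩) (du σ α w x k) i) 0 := by
        have := hasDerivAt_mulVec_line α w ⟨k, h⟩ i
          (fun t => hiddenState σ (α + t • w) x k) (du σ α w x k)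
          (fun j => hasDerivAt_hs hσ α w x k j)
        simpa [line_zero] using this
      have hM1 : HasDerivAt
          (fun t : ℝ => mulVec' ((α + t • w) ⟨k, h⟩) (du σ (α + t • w) v x k) i)
          (mulVec' (w ⟨k, h⟩) (du σ α v x k) i + mulVec' (α ⟨k, h⟩) (dp σ α v w x k) i) 0 := by
        have := hasDerivAt_mulVec_line α w ⟨k, h⟩ i
          (fun t => du σ (α + t • w) v x k) (dp σ α v w x k) (fun j => ih j)
        simpa [line_zero] using this
      have hM2 : HasDerivAt
          (fun t : ℝ => mulVec' (v ⟨k, h⟩) (hiddenState σ (α + t • w) x k) i)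
          (mulVec' (v ⟨k, h⟩) (du σ α w x k) i) 0 :=
        hasDerivAt_mulVec_const (v ⟨k, h⟩) i _ _ (fun j => hasDerivAt_hs hσ α w x k j)
      -- derivative of deriv σ (Z t)
      have hσ'Z : HasDerivAt
          (fun t : ℝ => deriv σ (mulVec' ((α + t • w) ⟨k, h⟩) (hiddenState σ (α + t • w) x k) i))
          (deriv (deriv σ) (mulVec' (α ⟨k, h⟩) (hiddenState σ α x k) i) *
            (mulVec' (w ⟨k, h⟩) (hiddenState σ α x k) i + mulVec' (α ⟨k, h⟩) (du σ α w x k) i)) 0 := by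
        have hz := deriv_sigma_hasDerivAt hσ
          (mulVec' ((α + (0:ℝ) • w) ⟨k, h⟩) (hiddenState σ (α + (0:ℝ) • w) x k) i)
        have hc := hz.comp (0:ℝ) hZ
        simp only [line_zero] at hc
        simpa [Function.comp_def] using hc
      have hprod := hσ'Z.fun_mul (hM1.fun_add hM2)
      have htot := (ih i).fun_add (hprod.const_mul ((Real.sqrt L)⁻¹))
      have heq : (fun t : ℝ => du σ (α + t • w) v x (k+1) i) =
          fun t : ℝ => du σ (α + t • w) v x k i + (Real.sqrt L)⁻¹ *
            (deriv σ (mulVec' ((α + t • w) ⟨k, h⟩) (hiddenState σ (α + t • w) x k) i) *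
              (mulVec' ((α + t • w) ⟨k, h⟩) (du σ (α + t • w) v x k) i
                + mulVec' (v ⟨k, h⟩) (hiddenState σ (α + t • w) x k) i)) := by
        funext t; exact du_succ σ _ v x h i
      rw [heq, dp_succ σ α v w x h i]
      refine htot.congr_deriv ?_
      simp only [line_zero]
      ring
    · have heq : (fun t : ℝ => du σ (α + t • w) v x (k+1) i) =
          fun t : ℝ => du σ (α + t • w) v x k i := by
        funext t; rw [du, dif_neg h]
      rw [heq, dp, dif_neg h]
      exact ih i

lemma contDiff_hs {d L : ℕ} {σ : ℝ → ℝ} (hσ : ContDiff ℝ 2 σ) (x : Fin d → ℝ) :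
    ∀ (k : ℕ) (i : Fin d),
      ContDiff ℝ 2 (fun α : Fin L → Fin d → Fin d → ℝ => hiddenState σ α x k i) := by
  intro k
  induction k with
  | zero => intro i; simpa [hiddenState] using contDiff_const
  | succ k ih =>
    intro i
    by_cases h : k < L
    · have heq : (fun α : Fin L → Fin d → Fin d → ℝ => hiddenState σ α x (k+1) i) =
          fun α => hiddenState σ α x k i +
            (Real.sqrt L)⁻¹ * σ (∑ j, α ⟨k, h⟩ i j * hiddenState σ α x k j) := by
        funext α; rw [hs_succ σ α x h i]; rfl
      rw [heq]
      apply (ih i).add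
      apply contDiff_const.mul
      apply hσ.comp
      apply ContDiff.sum
      intro j _
      exact (by fun_prop : ContDiff ℝ 2 (fun α : Fin L → Fin d → Fin d → ℝ => α ⟨k, h⟩ i j)).mul (ih j)
    · have heq : (fun α : Fin L → Fin d → Fin d → ℝ => hiddenState σ α x (k+1) i) =
          fun α => hiddenState σ α x k i := by
        funext α; rw [hiddenState, dif_neg h]
      rw [heq]; exact ih i

lemma contDiff_loss {d L N : ℕ} {σ : ℝ → ℝ} (hσ : ContDiff ℝ 2 σ) (x y : Fin N → Fin d → ℝ) :
    ContDiff ℝ 2 (loss (d := d) (L := L) σ x y) := by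
  unfold loss
  apply contDiff_const.mul
  apply ContDiff.sum; intro i _
  apply ContDiff.sum; intro j _
  exact (contDiff_const.sub (contDiff_hs hσ (x i) L j)).pow 2

/-- First directional derivative of the loss. -/
def Dexpr {d L N : ℕ} (σ : ℝ → ℝ) (x y : Fin N → Fin d → ℝ)
    (β v : Fin L → Fin d → Fin d → ℝ) : ℝ :=
  (1 / (2 * N)) * ∑ i, ∑ j,
    2 * (hiddenState σ β (x i) L j - y i j) * du σ β v (x i) L j

/-- Second mixed directional derivative of the loss. -/
def Hexpr {d L N : ℕ} (σ : ℝ → ℝ) (x y : Fin N → Fin d → ℝ)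
    (α v w : Fin L → Fin d → Fin d → ℝ) : ℝ :=
  (1 / (2 * N)) * ∑ i, ∑ j,
    2 * (du σ α w (x i) L j * du σ α v (x i) L j
      + (hiddenState σ α (x i) L j - y i j) * dp σ α v w (x i) L j)

lemma hasDerivAt_loss_line {d L N : ℕ} {σ : ℝ → ℝ} (hσ : ContDiff ℝ 2 σ)
    (x y : Fin N → Fin d → ℝ) (β v : Fin L → Fin d → Fin d → ℝ) :
    HasDerivAt (fun s : ℝ => loss σ x y (β + s • v)) (Dexpr σ x y β v) 0 := by
  have hterm : ∀ (i : Fin N) (j : Fin d), HasDerivAt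
      (fun s : ℝ => (y i j - hiddenState σ (β + s • v) (x i) L j) ^ 2)
      (2 * (hiddenState σ β (x i) L j - y i j) * du σ β v (x i) L j) 0 := by
    intro i j
    have hA := hasDerivAt_hs hσ β v (x i) L j
    have := ((hA.const_sub (y i j)).fun_pow 2)
    simp only [line_zero] at this
    refine this.congr_deriv ?_
    ring
  have hsum : HasDerivAt
      (fun s : ℝ => ∑ i, ∑ j, (y i j - hiddenState σ (β + s • v) (x i) L j) ^ 2)
      (∑ i, ∑ j, 2 * (hiddenState σ β (x i) L j - y i j) * du σ β v (x i) L j) 0 := by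
    apply HasDerivAt.fun_sum; intro i _
    exact HasDerivAt.fun_sum (fun j _ => hterm i j)
  have := hsum.const_mul (1 / (2 * (N:ℝ)))
  simpa [loss, Dexpr] using this

lemma fderiv_loss_eq {d L N : ℕ} {σ : ℝ → ℝ} (hσ : ContDiff ℝ 2 σ)
    (x y : Fin N → Fin d → ℝ) (β v : Fin L → Fin d → Fin d → ℝ) :
    fderiv ℝ (loss σ x y) β v = Dexpr σ x y β v := by
  have hdiff : DifferentiableAt ℝ (loss σ x y) β :=
    ((contDiff_loss hσ x y).differentiable (by norm_num)) β
  have hline : HasDerivAt (fun s : ℝ => β + s • v) v 0 := by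
    simpa using ((hasDerivAt_id (0:ℝ)).smul_const v).const_add β
  have h1 : HasDerivAt (fun s : ℝ => loss σ x y (β + s • v)) (fderiv ℝ (loss σ x y) β v) 0 := by
    have hF : HasFDerivAt (loss σ x y) (fderiv ℝ (loss σ x y) β) (β + (0:ℝ) • v) := by
      rw [line_zero]; exact hdiff.hasFDerivAt
    exact hF.comp_hasDerivAt (0:ℝ) hline
  exact h1.unique (hasDerivAt_loss_line hσ x y β v)

lemma hasDerivAt_Dexpr {d L N : ℕ} {σ : ℝ → ℝ} (hσ : ContDiff ℝ 2 σ)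
    (x y : Fin N → Fin d → ℝ) (α v w : Fin L → Fin d → Fin d → ℝ) :
    HasDerivAt (fun t : ℝ => Dexpr σ x y (α + t • w) v) (Hexpr σ x y α v w) 0 := by
  have hterm : ∀ (i : Fin N) (j : Fin d), HasDerivAt
      (fun t : ℝ => 2 * (hiddenState σ (α + t • w) (x i) L j - y i j) * du σ (α + t • w) v (x i) L j)
      (2 * (du σ α w (x i) L j * du σ α v (x i) L j
        + (hiddenState σ α (x i) L j - y i j) * dp σ α v w (x i) L j)) 0 := by
    intro i j
    have hh := hasDerivAt_hs hσ α w (x i) L j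
    have hu := hasDerivAt_du hσ α v w (x i) L j
    have := (((hh.sub_const (y i j)).const_mul (2:ℝ)).fun_mul hu)
    simp only [line_zero] at this
    refine this.congr_deriv ?_
    ring
  have hsum : HasDerivAt
      (fun t : ℝ => ∑ i, ∑ j,
        2 * (hiddenState σ (α + t • w) (x i) L j - y i j) * du σ (α + t • w) v (x i) L j)
      (∑ i, ∑ j, 2 * (du σ α w (x i) L j * du σ α v (x i) L j
        + (hiddenState σ α (x i) L j - y i j) * dp σ α v w (x i) L j)) 0 := by
    apply HasDerivAt.fun_sum; intro i _
    exact HasDerivAt.fun_sum (fun j _ => hterm i j)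
  have := hsum.const_mul (1 / (2 * (N:ℝ)))
  simpa [Dexpr, Hexpr] using this

/-- The second `fderiv` expression in the theorem equals `Hexpr`. -/
lemma snd_fderiv_eq {d L N : ℕ} {σ : ℝ → ℝ} (hσ : ContDiff ℝ 2 σ)
    (x y : Fin N → Fin d → ℝ) (α v w : Fin L → Fin d → Fin d → ℝ) :
    fderiv ℝ (fun a => fderiv ℝ (loss σ x y) a v) α w = Hexpr σ x y α v w := by
  have hC1 : ContDiff ℝ 1 (fderiv ℝ (loss (L := L) σ x y)) := by
    have h' : ContDiff ℝ ((1:ℕ)+1) (loss (L := L) σ x y) := by exact_mod_cast contDiff_loss hσ x y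
    exact_mod_cast (contDiff_succ_iff_fderiv.mp h').2.2
  have hdc : DifferentiableAt ℝ (fderiv ℝ (loss (L := L) σ x y)) α := (hC1.differentiable one_ne_zero) α
  -- fderiv of the evaluated map
  have h1 : fderiv ℝ (fun a => fderiv ℝ (loss σ x y) a v) α w
      = (fderiv ℝ (fderiv ℝ (loss σ x y)) α w) v := by
    rw [fderiv_clm_apply hdc (differentiableAt_const v)]
    simp
  -- derivative along the line t ↦ α + t w
  have hline : HasDerivAt (fun t : ℝ => α + t • w) w 0 := by
    simpa using ((hasDerivAt_id (0:ℝ)).smul_const w).const_add α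
  have h2 : HasDerivAt (fun t : ℝ => fderiv ℝ (loss σ x y) (α + t • w))
      (fderiv ℝ (fderiv ℝ (loss (L := L) σ x y)) α w) 0 := by
    have hF : HasFDerivAt (fderiv ℝ (loss (L := L) σ x y))
        (fderiv ℝ (fderiv ℝ (loss (L := L) σ x y)) α) (α + (0:ℝ) • w) := by
      rw [line_zero]; exact hdc.hasFDerivAt
    exact hF.comp_hasDerivAt (0:ℝ) hline
  have h3 : HasDerivAt (fun t : ℝ => fderiv ℝ (loss σ x y) (α + t • w) v)
      ((fderiv ℝ (fderiv ℝ (loss σ x y)) α w) v) 0 := by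
    simpa using h2.clm_apply (hasDerivAt_const (0:ℝ) v)
  have h4 : HasDerivAt (fun t : ℝ => fderiv ℝ (loss σ x y) (α + t • w) v)
      (Hexpr σ x y α v w) 0 := by
    have heq : (fun t : ℝ => fderiv ℝ (loss σ x y) (α + t • w) v)
        = fun t : ℝ => Dexpr σ x y (α + t • w) v := by
      funext t; exact fderiv_loss_eq hσ x y _ v
    rw [heq]
    exact hasDerivAt_Dexpr hσ x y α v w
  rw [h1]
  exact h3.unique h4

lemma vnorm_abs {d : ℕ} (a : Fin d → ℝ) : vnorm (fun i => |a i|) = vnorm a := by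
  simp [vnorm, sq_abs]

lemma vnorm_neg {d : ℕ} (a : Fin d → ℝ) : vnorm (fun i => -a i) = vnorm a := by
  simp [vnorm]

lemma sqrt_inv_mul_self (L : ℕ) (hL : 1 ≤ L) :
    (Real.sqrt L)⁻¹ * (Real.sqrt L)⁻¹ = (L:ℝ)⁻¹ := by
  rw [← mul_inv]
  rw [Real.mul_self_sqrt (by positivity)]

lemma one_add_div_pow_le (c : ℝ) (hc : 0 ≤ c) (L : ℕ) (hL : 1 ≤ L) {k : ℕ} (hk : k ≤ L) :
    (1 + c / L) ^ k ≤ Real.exp c := by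
  have hL0 : (0:ℝ) < L := by exact_mod_cast hL
  have h1 : (1 + c / L) ≤ Real.exp (c / L) := by
    have := Real.add_one_le_exp (c / L)
    linarith
  calc (1 + c / L) ^ k ≤ Real.exp (c / L) ^ k := by
        apply pow_le_pow_left₀ (by positivity) h1
  _ = Real.exp (c / L * k) := by rw [← Real.exp_nat_mul]; ring_nf
  _ ≤ Real.exp c := by
      apply Real.exp_le_exp.mpr
      rw [div_mul_eq_mul_div, mul_comm]
      rw [div_le_iff₀ hL0]
      have : (k:ℝ) ≤ L := by exact_mod_cast hk
      nlinarith

section Bounds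
variable {d L : ℕ} {σ : ℝ → ℝ} {α : Fin L → Fin d → Fin d → ℝ} {x : Fin d → ℝ} {c : ℝ}

lemma hs_bound (hL : 1 ≤ L) (hc : 0 ≤ c)
    (hσa : ∀ z, |σ z| ≤ |z|)
    (hα : ∀ k, frobNorm (α k) ≤ c * (Real.sqrt L)⁻¹) (hx : vnorm x ≤ 1) :
    ∀ k, k ≤ L → vnorm (hiddenState σ α x k) ≤ (1 + c / L) ^ k := by
  have hL0 : (0:ℝ) < L := by exact_mod_cast hL
  intro k
  induction k with
  | zero => intro _; simpa [hiddenState] using hx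
  | succ k ih =>
    intro hk1
    have h : k < L := by omega
    have IH := ih (by omega)
    have hpow : (0:ℝ) ≤ (1 + c / L) ^ k := by positivity
    have hhead : ∀ i, hiddenState σ α x (k+1) i =
        hiddenState σ α x k i + (Real.sqrt L)⁻¹ * σ (mulVec' (α ⟨k, h⟩) (hiddenState σ α x k) i) :=
      fun i => hs_succ σ α x h i
    have e1 : vnorm (hiddenState σ α x (k+1)) ≤ vnorm (hiddenState σ α x k)
        + vnorm (fun i => (Real.sqrt L)⁻¹ * σ (mulVec' (α ⟨k, h⟩) (hiddenState σ α x k) i)) := by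
      have := vnorm_add_le (hiddenState σ α x k)
        (fun i => (Real.sqrt L)⁻¹ * σ (mulVec' (α ⟨k, h⟩) (hiddenState σ α x k) i))
      have heqf : vnorm (hiddenState σ α x (k+1)) = vnorm (fun i => hiddenState σ α x k i
          + (Real.sqrt L)⁻¹ * σ (mulVec' (α ⟨k, h⟩) (hiddenState σ α x k) i)) := by
        congr 1; funext i; exact hhead i
      rw [heqf]; exact this
    have e2 : vnorm (fun i => (Real.sqrt L)⁻¹ * σ (mulVec' (α ⟨k, h⟩) (hiddenState σ α x k) i))
        ≤ (Real.sqrt L)⁻¹ * (frobNorm (α ⟨k, h⟩) * vnorm (hiddenState σ α x k)) := by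
      have hm : vnorm (fun i => (Real.sqrt L)⁻¹ * σ (mulVec' (α ⟨k, h⟩) (hiddenState σ α x k) i))
          ≤ vnorm (fun i => (Real.sqrt L)⁻¹ * |mulVec' (α ⟨k, h⟩) (hiddenState σ α x k) i|) := by
        apply vnorm_mono
        intro i
        rw [abs_mul, abs_of_nonneg (by positivity : (0:ℝ) ≤ (Real.sqrt L)⁻¹)]
        have : (0:ℝ) ≤ (Real.sqrt L)⁻¹ := by positivity
        exact mul_le_mul_of_nonneg_left (hσa _) this
      calc vnorm (fun i => (Real.sqrt L)⁻¹ * σ (mulVec' (α ⟨k, h⟩) (hiddenState σ α x k) i))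
          ≤ vnorm (fun i => (Real.sqrt L)⁻¹ * |mulVec' (α ⟨k, h⟩) (hiddenState σ α x k) i|) := hm
      _ = (Real.sqrt L)⁻¹ * vnorm (mulVec' (α ⟨k, h⟩) (hiddenState σ α x k)) := by
          rw [vnorm_const_mul, abs_of_nonneg (by positivity : (0:ℝ) ≤ (Real.sqrt L)⁻¹), vnorm_abs]
      _ ≤ (Real.sqrt L)⁻¹ * (frobNorm (α ⟨k, h⟩) * vnorm (hiddenState σ α x k)) := by
          apply mul_le_mul_of_nonneg_left (vnorm_mulVec_le _ _) (by positivity)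
    have e3 : (Real.sqrt L)⁻¹ * (frobNorm (α ⟨k, h⟩) * vnorm (hiddenState σ α x k))
        ≤ c / L * (1 + c / L) ^ k := by
      have h1 : frobNorm (α ⟨k, h⟩) * vnorm (hiddenState σ α x k)
          ≤ (c * (Real.sqrt L)⁻¹) * (1 + c / L) ^ k := by
        apply mul_le_mul (hα _) IH (vnorm_nonneg _) (by positivity)
      calc (Real.sqrt L)⁻¹ * (frobNorm (α ⟨k, h⟩) * vnorm (hiddenState σ α x k))
          ≤ (Real.sqrt L)⁻¹ * ((c * (Real.sqrt L)⁻¹) * (1 + c / L) ^ k) :=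
            mul_le_mul_of_nonneg_left h1 (by positivity)
      _ = ((Real.sqrt L)⁻¹ * (Real.sqrt L)⁻¹) * c * (1 + c / L) ^ k := by ring
      _ = c / L * (1 + c / L) ^ k := by rw [sqrt_inv_mul_self L hL]; ring
    calc vnorm (hiddenState σ α x (k+1)) ≤ (1 + c / L) ^ k + c / L * (1 + c / L) ^ k := by
          have := le_trans e2 e3
          linarith [e1, IH]
    _ = (1 + c / L) ^ (k+1) := by ring

end Bounds


section Bounds2
variable {d L : ℕ} {σ : ℝ → ℝ} {α v w : Fin L → Fin d → Fin d → ℝ} {x : Fin d → ℝ} {c : ℝ}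

/-- `Frobenius` norm of the `k`-th direction slice, as a function on `ℕ`. -/
def Vf {d L : ℕ} (v : Fin L → Fin d → Fin d → ℝ) : ℕ → ℝ :=
  fun j => if hj : j < L then frobNorm (v ⟨j, hj⟩) else 0

lemma Vf_nonneg (v : Fin L → Fin d → Fin d → ℝ) (j : ℕ) : 0 ≤ Vf v j := by
  unfold Vf; split
  · exact frobNorm_nonneg _
  · exact le_refl 0

lemma Vf_eq (v : Fin L → Fin d → Fin d → ℝ) {j : ℕ} (hj : j < L) :
    Vf v j = frobNorm (v ⟨j, hj⟩) := by
  unfold Vf; rw [dif_pos hj]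

lemma du_bound (hL : 1 ≤ L) (hc : 0 ≤ c)
    (hσa : ∀ z, |σ z| ≤ |z|) (hσb : ∀ z, |deriv σ z| ≤ 1)
    (hα : ∀ k, frobNorm (α k) ≤ c * (Real.sqrt L)⁻¹) (hx : vnorm x ≤ 1) :
    ∀ k, k ≤ L → vnorm (du σ α v x k) ≤
      (1 + c / L) ^ k * Real.exp c * (Real.sqrt L)⁻¹ * ∑ j ∈ Finset.range k, Vf v j := by
  have hL0 : (0:ℝ) < L := by exact_mod_cast hL
  have hsq : (0:ℝ) < Real.sqrt L := Real.sqrt_pos.mpr hL0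
  intro k
  induction k with
  | zero =>
    intro _
    simp only [Finset.range_zero, Finset.sum_empty, mul_zero]
    have : vnorm (du σ α v x 0) = 0 := by simp [du, vnorm]
    simp [this]
  | succ k ih =>
    intro hk1
    have h : k < L := by omega
    have IH := ih (by omega)
    have hhs := hs_bound hL hc hσa hα hx k (by omega)
    have hec : (1:ℝ) ≤ Real.exp c := by
      rw [Real.one_le_exp_iff]; exact hc
    have hone : (1:ℝ) ≤ 1 + c / L := by
      have : 0 ≤ c / (L:ℝ) := by positivity
      linarith
    have hS : 0 ≤ ∑ j ∈ Finset.range k, Vf v j :=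
      Finset.sum_nonneg fun j _ => Vf_nonneg v j
    set m1 : Fin d → ℝ := mulVec' (α ⟨k, h⟩) (du σ α v x k) with hm1
    set m2 : Fin d → ℝ := mulVec' (v ⟨k, h⟩) (hiddenState σ α x k) with hm2
    have e1 : vnorm (du σ α v x (k+1)) ≤ vnorm (du σ α v x k)
        + vnorm (fun i => (Real.sqrt L)⁻¹ * (|m1 i| + |m2 i|)) := by
      have heqf : vnorm (du σ α v x (k+1)) = vnorm (fun i => du σ α v x k i
          + (Real.sqrt L)⁻¹ * (deriv σ (mulVec' (α ⟨k, h⟩) (hiddenState σ α x k) i) *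
            (m1 i + m2 i))) := by
        congr 1; funext i; exact du_succ σ α v x h i
      rw [heqf]
      calc vnorm (fun i => du σ α v x k i
            + (Real.sqrt L)⁻¹ * (deriv σ (mulVec' (α ⟨k, h⟩) (hiddenState σ α x k) i) *
              (m1 i + m2 i)))
          ≤ vnorm (fun i => du σ α v x k i)
            + vnorm (fun i => (Real.sqrt L)⁻¹ * (deriv σ (mulVec' (α ⟨k, h⟩) (hiddenState σ α x k) i) *
              (m1 i + m2 i))) := vnorm_add_le _ _
      _ ≤ vnorm (du σ α v x k) + vnorm (fun i => (Real.sqrt L)⁻¹ * (|m1 i| + |m2 i|)) := by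
          apply add_le_add_right
          apply vnorm_mono
          intro i
          rw [abs_mul, abs_of_nonneg (by positivity : (0:ℝ) ≤ (Real.sqrt L)⁻¹), abs_mul]
          apply mul_le_mul_of_nonneg_left _ (by positivity)
          calc |deriv σ (mulVec' (α ⟨k, h⟩) (hiddenState σ α x k) i)| * |m1 i + m2 i|
              ≤ 1 * |m1 i + m2 i| := by
                apply mul_le_mul_of_nonneg_right (hσb _) (abs_nonneg _)
          _ = |m1 i + m2 i| := one_mul _
          _ ≤ |m1 i| + |m2 i| := abs_add_le _ _
    have e2 : vnorm (fun i => (Real.sqrt L)⁻¹ * (|m1 i| + |m2 i|))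
        ≤ (Real.sqrt L)⁻¹ * (vnorm m1 + vnorm m2) := by
      rw [show (fun i => (Real.sqrt L)⁻¹ * (|m1 i| + |m2 i|))
            = fun i => (Real.sqrt L)⁻¹ * (|m1 i| + |m2 i|) from rfl]
      calc vnorm (fun i => (Real.sqrt L)⁻¹ * (|m1 i| + |m2 i|))
          = (Real.sqrt L)⁻¹ * vnorm (fun i => |m1 i| + |m2 i|) := by
            rw [vnorm_const_mul, abs_of_nonneg (by positivity : (0:ℝ) ≤ (Real.sqrt L)⁻¹)]
      _ ≤ (Real.sqrt L)⁻¹ * (vnorm (fun i => |m1 i|) + vnorm (fun i => |m2 i|)) := by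
            apply mul_le_mul_of_nonneg_left (vnorm_add_le _ _) (by positivity)
      _ = (Real.sqrt L)⁻¹ * (vnorm m1 + vnorm m2) := by rw [vnorm_abs, vnorm_abs]
    have hb1 : vnorm m1 ≤ c * (Real.sqrt L)⁻¹ * vnorm (du σ α v x k) := by
      calc vnorm m1 ≤ frobNorm (α ⟨k, h⟩) * vnorm (du σ α v x k) := vnorm_mulVec_le _ _
      _ ≤ c * (Real.sqrt L)⁻¹ * vnorm (du σ α v x k) :=
          mul_le_mul_of_nonneg_right (hα _) (vnorm_nonneg _)
    have hb2 : vnorm m2 ≤ Vf v k * (1 + c / L) ^ k := by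
      calc vnorm m2 ≤ frobNorm (v ⟨k, h⟩) * vnorm (hiddenState σ α x k) := vnorm_mulVec_le _ _
      _ ≤ Vf v k * (1 + c / L) ^ k := by
          rw [Vf_eq v h]
          exact mul_le_mul_of_nonneg_left hhs (frobNorm_nonneg _)
    -- combine
    have key : vnorm (du σ α v x (k+1)) ≤ (1 + c / L) * vnorm (du σ α v x k)
        + (Real.sqrt L)⁻¹ * (Vf v k * (1 + c / L) ^ k) := by
      have h3 : (Real.sqrt L)⁻¹ * (vnorm m1 + vnorm m2)
          ≤ c / L * vnorm (du σ α v x k) + (Real.sqrt L)⁻¹ * (Vf v k * (1 + c / L) ^ k) := by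
        have h4 : (Real.sqrt L)⁻¹ * vnorm m1 ≤ c / L * vnorm (du σ α v x k) := by
          calc (Real.sqrt L)⁻¹ * vnorm m1
              ≤ (Real.sqrt L)⁻¹ * (c * (Real.sqrt L)⁻¹ * vnorm (du σ α v x k)) :=
                mul_le_mul_of_nonneg_left hb1 (by positivity)
          _ = ((Real.sqrt L)⁻¹ * (Real.sqrt L)⁻¹) * c * vnorm (du σ α v x k) := by ring
          _ = c / L * vnorm (du σ α v x k) := by rw [sqrt_inv_mul_self L hL]; ring
        have h5 : (Real.sqrt L)⁻¹ * vnorm m2 ≤ (Real.sqrt L)⁻¹ * (Vf v k * (1 + c / L) ^ k) :=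
          mul_le_mul_of_nonneg_left hb2 (by positivity)
        calc (Real.sqrt L)⁻¹ * (vnorm m1 + vnorm m2)
            = (Real.sqrt L)⁻¹ * vnorm m1 + (Real.sqrt L)⁻¹ * vnorm m2 := by ring
        _ ≤ c / L * vnorm (du σ α v x k) + (Real.sqrt L)⁻¹ * (Vf v k * (1 + c / L) ^ k) := by
            linarith
      have := le_trans e2 h3
      have e1' := e1
      nlinarith [vnorm_nonneg (du σ α v x k)]
    -- conclude with the inductive bound
    have hVk : 0 ≤ Vf v k := Vf_nonneg v k
    calc vnorm (du σ α v x (k+1))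
        ≤ (1 + c / L) * ((1 + c / L) ^ k * Real.exp c * (Real.sqrt L)⁻¹ * ∑ j ∈ Finset.range k, Vf v j)
          + (Real.sqrt L)⁻¹ * (Vf v k * (1 + c / L) ^ k) := by
          have h6 : (1 + c / L) * vnorm (du σ α v x k)
              ≤ (1 + c / L) * ((1 + c / L) ^ k * Real.exp c * (Real.sqrt L)⁻¹ * ∑ j ∈ Finset.range k, Vf v j) :=
            mul_le_mul_of_nonneg_left IH (by linarith)
          linarith
    _ ≤ (1 + c / L) ^ (k+1) * Real.exp c * (Real.sqrt L)⁻¹ * ∑ j ∈ Finset.range (k+1), Vf v j := by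
        rw [Finset.sum_range_succ]
        have hpw : (0:ℝ) ≤ (1 + c/L)^k := by positivity
        have step2 : (Real.sqrt L)⁻¹ * (Vf v k * (1 + c / L) ^ k)
            ≤ (1 + c / L) ^ (k+1) * Real.exp c * (Real.sqrt L)⁻¹ * Vf v k := by
          have : (1 + c / L) ^ k ≤ (1 + c / L) ^ (k+1) * Real.exp c := by
            calc (1 + c / L) ^ k ≤ (1 + c / L) ^ (k+1) := by
                  apply pow_le_pow_right₀ hone (by omega)
            _ ≤ (1 + c / L) ^ (k+1) * Real.exp c := le_mul_of_one_le_right (by positivity) hec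
          calc (Real.sqrt L)⁻¹ * (Vf v k * (1 + c / L) ^ k)
              ≤ (Real.sqrt L)⁻¹ * (Vf v k * ((1 + c / L) ^ (k+1) * Real.exp c)) := by
                apply mul_le_mul_of_nonneg_left _ (by positivity)
                exact mul_le_mul_of_nonneg_left this hVk
          _ = (1 + c / L) ^ (k+1) * Real.exp c * (Real.sqrt L)⁻¹ * Vf v k := by ring
        have expand : (1 + c / L) * ((1 + c / L) ^ k * Real.exp c * (Real.sqrt L)⁻¹ * ∑ j ∈ Finset.range k, Vf v j)
            = (1 + c / L) ^ (k+1) * Real.exp c * (Real.sqrt L)⁻¹ * ∑ j ∈ Finset.range k, Vf v j := by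
          ring
        rw [mul_add]
        linarith [step2, expand.le, expand.ge]

end Bounds2


section Bounds3
variable {d L : ℕ} {σ : ℝ → ℝ} {α v w : Fin L → Fin d → Fin d → ℝ} {x : Fin d → ℝ} {c : ℝ}

lemma rec_bound {c : ℝ} (hc : 0 ≤ c) (L : ℕ) (hL : 1 ≤ L) (P G : ℕ → ℝ)
    (hP0 : P 0 = 0) (hG : ∀ k, 0 ≤ G k)
    (hstep : ∀ k, k < L → P (k+1) ≤ (1 + c / L) * P k + (Real.sqrt L)⁻¹ * G k) :
    ∀ k, k ≤ L → P k ≤ (1 + c / L) ^ k * (Real.sqrt L)⁻¹ * ∑ j ∈ Finset.range k, G j := by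
  have hL0 : (0:ℝ) < L := by exact_mod_cast hL
  have hone : (1:ℝ) ≤ 1 + c / L := by
    have : 0 ≤ c / (L:ℝ) := by positivity
    linarith
  intro k
  induction k with
  | zero => intro _; simp [hP0]
  | succ k ih =>
    intro hk1
    have h : k < L := by omega
    have IH := ih (by omega)
    have hS : 0 ≤ ∑ j ∈ Finset.range k, G j := Finset.sum_nonneg fun j _ => hG j
    have hpw1 : (1:ℝ) ≤ (1 + c / L) ^ (k+1) := one_le_pow₀ hone
    calc P (k+1) ≤ (1 + c / L) * P k + (Real.sqrt L)⁻¹ * G k := hstep k h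
    _ ≤ (1 + c / L) * ((1 + c / L) ^ k * (Real.sqrt L)⁻¹ * ∑ j ∈ Finset.range k, G j)
        + (Real.sqrt L)⁻¹ * G k := by
        have := mul_le_mul_of_nonneg_left IH (by linarith : (0:ℝ) ≤ 1 + c / L)
        linarith
    _ ≤ (1 + c / L) ^ (k+1) * (Real.sqrt L)⁻¹ * ∑ j ∈ Finset.range (k+1), G j := by
        rw [Finset.sum_range_succ, mul_add]
        have e1 : (1 + c / L) * ((1 + c / L) ^ k * (Real.sqrt L)⁻¹ * ∑ j ∈ Finset.range k, G j)
            = (1 + c / L) ^ (k+1) * (Real.sqrt L)⁻¹ * ∑ j ∈ Finset.range k, G j := by ring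
        have e2 : (Real.sqrt L)⁻¹ * G k ≤ (1 + c / L) ^ (k+1) * (Real.sqrt L)⁻¹ * G k := by
          have h0 : (0:ℝ) ≤ (Real.sqrt L)⁻¹ * G k :=
            mul_nonneg (by positivity) (hG k)
          nlinarith
        linarith [e1.le, e1.ge]

lemma dp_bound (hL : 1 ≤ L) (hc : 0 ≤ c)
    (hσa : ∀ z, |σ z| ≤ |z|) (hσb : ∀ z, |deriv σ z| ≤ 1) (hσc : ∀ z, |deriv (deriv σ) z| ≤ 1)
    (hα : ∀ k, frobNorm (α k) ≤ c * (Real.sqrt L)⁻¹) (hx : vnorm x ≤ 1)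
    {Av Bw : ℝ} (hAv : 0 ≤ Av) (hBw : 0 ≤ Bw)
    (hU : ∀ k, k ≤ L → vnorm (du σ α v x k) ≤ Av)
    (hW : ∀ k, k ≤ L → vnorm (du σ α w x k) ≤ Bw) :
    ∀ k, k ≤ L → vnorm (dp σ α v w x k) ≤ (1 + c / L) ^ k * (Real.sqrt L)⁻¹ *
      ∑ j ∈ Finset.range k, ((Vf w j * Real.exp c + c * (Real.sqrt L)⁻¹ * Bw)
          * (Vf v j * Real.exp c + c * (Real.sqrt L)⁻¹ * Av)
        + (Vf w j * Av + Vf v j * Bw)) := by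
  have hL0 : (0:ℝ) < L := by exact_mod_cast hL
  have hec : (1:ℝ) ≤ Real.exp c := by rw [Real.one_le_exp_iff]; exact hc
  apply rec_bound hc L hL _ _ (by simp [dp, vnorm])
  · intro k
    have h1 : 0 ≤ Vf w k * Real.exp c + c * (Real.sqrt L)⁻¹ * Bw := by
      have := Vf_nonneg w k; positivity
    have h2 : 0 ≤ Vf v k * Real.exp c + c * (Real.sqrt L)⁻¹ * Av := by
      have := Vf_nonneg v k; positivity
    have h3 := Vf_nonneg w k; have h4 := Vf_nonneg v k
    positivity
  · intro k h
    have hkL : k ≤ L := by omega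
    have hhs : vnorm (hiddenState σ α x k) ≤ Real.exp c :=
      (hs_bound hL hc hσa hα hx k hkL).trans (one_add_div_pow_le c hc L hL hkL)
    set z : Fin d → ℝ := fun i => mulVec' (α ⟨k, h⟩) (hiddenState σ α x k) i with hz
    set aa : Fin d → ℝ := fun i => mulVec' (α ⟨k, h⟩) (du σ α w x k) i
      + mulVec' (w ⟨k, h⟩) (hiddenState σ α x k) i with ha
    set bb : Fin d → ℝ := fun i => mulVec' (α ⟨k, h⟩) (du σ α v x k) i
      + mulVec' (v ⟨k, h⟩) (hiddenState σ α x k) i with hb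
    set cc : Fin d → ℝ := fun i => mulVec' (α ⟨k, h⟩) (dp σ α v w x k) i
      + mulVec' (w ⟨k, h⟩) (du σ α v x k) i + mulVec' (v ⟨k, h⟩) (du σ α w x k) i with hcc
    -- entrywise bound
    have e1 : vnorm (dp σ α v w x (k+1)) ≤ vnorm (dp σ α v w x k)
        + (Real.sqrt L)⁻¹ * vnorm (fun i => |aa i| * |bb i| + |cc i|) := by
      have heqf : vnorm (dp σ α v w x (k+1)) = vnorm (fun i => dp σ α v w x k i
          + (Real.sqrt L)⁻¹ * (deriv (deriv σ) (z i) * aa i * bb i + deriv σ (z i) * cc i)) := by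
        congr 1; funext i; exact dp_succ σ α v w x h i
      rw [heqf]
      calc vnorm (fun i => dp σ α v w x k i
            + (Real.sqrt L)⁻¹ * (deriv (deriv σ) (z i) * aa i * bb i + deriv σ (z i) * cc i))
          ≤ vnorm (dp σ α v w x k)
            + vnorm (fun i => (Real.sqrt L)⁻¹ * (deriv (deriv σ) (z i) * aa i * bb i + deriv σ (z i) * cc i)) :=
            vnorm_add_le _ _
      _ ≤ vnorm (dp σ α v w x k)
            + vnorm (fun i => (Real.sqrt L)⁻¹ * (|aa i| * |bb i| + |cc i|)) := by
          apply add_le_add_right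
          apply vnorm_mono
          intro i
          rw [abs_mul, abs_of_nonneg (by positivity : (0:ℝ) ≤ (Real.sqrt L)⁻¹)]
          apply mul_le_mul_of_nonneg_left _ (by positivity)
          calc |deriv (deriv σ) (z i) * aa i * bb i + deriv σ (z i) * cc i|
              ≤ |deriv (deriv σ) (z i) * aa i * bb i| + |deriv σ (z i) * cc i| := abs_add_le _ _
          _ ≤ |aa i| * |bb i| + |cc i| := by
              rw [abs_mul, abs_mul, abs_mul]
              have g1 : |deriv (deriv σ) (z i)| * |aa i| ≤ |aa i| := by
                nlinarith [hσc (z i), abs_nonneg (aa i), abs_nonneg (deriv (deriv σ) (z i))]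
              have g2 : |deriv σ (z i)| * |cc i| ≤ |cc i| := by
                nlinarith [hσb (z i), abs_nonneg (cc i), abs_nonneg (deriv σ (z i))]
              nlinarith [abs_nonneg (bb i), abs_nonneg (aa i)]
      _ = vnorm (dp σ α v w x k)
            + (Real.sqrt L)⁻¹ * vnorm (fun i => |aa i| * |bb i| + |cc i|) := by
          rw [vnorm_const_mul, abs_of_nonneg (by positivity : (0:ℝ) ≤ (Real.sqrt L)⁻¹)]
    -- norm bounds for aa, bb, cc
    have hba : vnorm aa ≤ c * (Real.sqrt L)⁻¹ * Bw + Vf w k * Real.exp c := by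
      calc vnorm aa ≤ vnorm (mulVec' (α ⟨k, h⟩) (du σ α w x k))
            + vnorm (mulVec' (w ⟨k, h⟩) (hiddenState σ α x k)) := vnorm_add_le _ _
      _ ≤ c * (Real.sqrt L)⁻¹ * Bw + Vf w k * Real.exp c := by
          apply add_le_add
          · calc vnorm (mulVec' (α ⟨k, h⟩) (du σ α w x k))
                ≤ frobNorm (α ⟨k, h⟩) * vnorm (du σ α w x k) := vnorm_mulVec_le _ _
            _ ≤ c * (Real.sqrt L)⁻¹ * Bw := by
                apply mul_le_mul (hα _) (hW k hkL) (vnorm_nonneg _) (by positivity)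
          · calc vnorm (mulVec' (w ⟨k, h⟩) (hiddenState σ α x k))
                ≤ frobNorm (w ⟨k, h⟩) * vnorm (hiddenState σ α x k) := vnorm_mulVec_le _ _
            _ ≤ Vf w k * Real.exp c := by
                rw [Vf_eq w h]
                exact mul_le_mul_of_nonneg_left hhs (frobNorm_nonneg _)
    have hbb : vnorm bb ≤ c * (Real.sqrt L)⁻¹ * Av + Vf v k * Real.exp c := by
      calc vnorm bb ≤ vnorm (mulVec' (α ⟨k, h⟩) (du σ α v x k))
            + vnorm (mulVec' (v ⟨k, h⟩) (hiddenState σ α x k)) := vnorm_add_le _ _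
      _ ≤ c * (Real.sqrt L)⁻¹ * Av + Vf v k * Real.exp c := by
          apply add_le_add
          · calc vnorm (mulVec' (α ⟨k, h⟩) (du σ α v x k))
                ≤ frobNorm (α ⟨k, h⟩) * vnorm (du σ α v x k) := vnorm_mulVec_le _ _
            _ ≤ c * (Real.sqrt L)⁻¹ * Av := by
                apply mul_le_mul (hα _) (hU k hkL) (vnorm_nonneg _) (by positivity)
          · calc vnorm (mulVec' (v ⟨k, h⟩) (hiddenState σ α x k))
                ≤ frobNorm (v ⟨k, h⟩) * vnorm (hiddenState σ α x k) := vnorm_mulVec_le _ _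
            _ ≤ Vf v k * Real.exp c := by
                rw [Vf_eq v h]
                exact mul_le_mul_of_nonneg_left hhs (frobNorm_nonneg _)
    have hbc : vnorm cc ≤ c * (Real.sqrt L)⁻¹ * vnorm (dp σ α v w x k)
        + (Vf w k * Av + Vf v k * Bw) := by
      calc vnorm cc ≤ vnorm (fun i => mulVec' (α ⟨k, h⟩) (dp σ α v w x k) i
            + mulVec' (w ⟨k, h⟩) (du σ α v x k) i)
            + vnorm (mulVec' (v ⟨k, h⟩) (du σ α w x k)) :=
          vnorm_add_le (fun i => mulVec' (α ⟨k, h⟩) (dp σ α v w x k) i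
            + mulVec' (w ⟨k, h⟩) (du σ α v x k) i) (mulVec' (v ⟨k, h⟩) (du σ α w x k))
      _ ≤ (vnorm (mulVec' (α ⟨k, h⟩) (dp σ α v w x k)) + vnorm (mulVec' (w ⟨k, h⟩) (du σ α v x k)))
            + vnorm (mulVec' (v ⟨k, h⟩) (du σ α w x k)) := by
          apply add_le_add_left (vnorm_add_le _ _)
      _ ≤ c * (Real.sqrt L)⁻¹ * vnorm (dp σ α v w x k) + (Vf w k * Av + Vf v k * Bw) := by
          have q1 : vnorm (mulVec' (α ⟨k, h⟩) (dp σ α v w x k))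
              ≤ c * (Real.sqrt L)⁻¹ * vnorm (dp σ α v w x k) :=
            (vnorm_mulVec_le _ _).trans (mul_le_mul_of_nonneg_right (hα _) (vnorm_nonneg _))
          have q2 : vnorm (mulVec' (w ⟨k, h⟩) (du σ α v x k)) ≤ Vf w k * Av := by
            rw [Vf_eq w h]
            exact (vnorm_mulVec_le _ _).trans
              (mul_le_mul_of_nonneg_left (hU k hkL) (frobNorm_nonneg _))
          have q3 : vnorm (mulVec' (v ⟨k, h⟩) (du σ α w x k)) ≤ Vf v k * Bw := by
            rw [Vf_eq v h]
            exact (vnorm_mulVec_le _ _).trans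
              (mul_le_mul_of_nonneg_left (hW k hkL) (frobNorm_nonneg _))
          linarith
    -- product bound
    have hprod : vnorm (fun i => |aa i| * |bb i| + |cc i|) ≤ vnorm aa * vnorm bb + vnorm cc := by
      calc vnorm (fun i => |aa i| * |bb i| + |cc i|)
          ≤ vnorm (fun i => |aa i| * |bb i|) + vnorm (fun i => |cc i|) := vnorm_add_le _ _
      _ ≤ vnorm aa * vnorm bb + vnorm (fun i => |cc i|) := by
          have hmm := vnorm_mul_le (fun i => |aa i|) (fun i => |bb i|)
          rw [vnorm_abs, vnorm_abs] at hmm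
          exact add_le_add hmm (le_refl _)
      _ = vnorm aa * vnorm bb + vnorm cc := by rw [vnorm_abs]
    -- assemble the step
    have hvA : vnorm aa * vnorm bb ≤ (Vf w k * Real.exp c + c * (Real.sqrt L)⁻¹ * Bw)
        * (Vf v k * Real.exp c + c * (Real.sqrt L)⁻¹ * Av) := by
      have r1 : vnorm aa ≤ Vf w k * Real.exp c + c * (Real.sqrt L)⁻¹ * Bw := by linarith
      have r2 : vnorm bb ≤ Vf v k * Real.exp c + c * (Real.sqrt L)⁻¹ * Av := by linarith
      have hpos : (0:ℝ) ≤ Vf w k * Real.exp c + c * (Real.sqrt L)⁻¹ * Bw := by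
        have h1 := Vf_nonneg w k
        have h2 : (0:ℝ) < Real.exp c := Real.exp_pos c
        have h3 : (0:ℝ) ≤ (Real.sqrt L)⁻¹ := by positivity
        nlinarith [mul_nonneg h1 h2.le, mul_nonneg (mul_nonneg hc h3) hBw]
      exact mul_le_mul r1 r2 (vnorm_nonneg _) hpos
    have hsplit : (Real.sqrt L)⁻¹ * (c * (Real.sqrt L)⁻¹ * vnorm (dp σ α v w x k))
        = c / L * vnorm (dp σ α v w x k) := by
      rw [show (Real.sqrt L)⁻¹ * (c * (Real.sqrt L)⁻¹ * vnorm (dp σ α v w x k))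
          = ((Real.sqrt L)⁻¹ * (Real.sqrt L)⁻¹) * c * vnorm (dp σ α v w x k) by ring,
        sqrt_inv_mul_self L hL]
      ring
    have hfin : (Real.sqrt L)⁻¹ * vnorm (fun i => |aa i| * |bb i| + |cc i|)
        ≤ c / L * vnorm (dp σ α v w x k)
          + (Real.sqrt L)⁻¹ * ((Vf w k * Real.exp c + c * (Real.sqrt L)⁻¹ * Bw)
            * (Vf v k * Real.exp c + c * (Real.sqrt L)⁻¹ * Av) + (Vf w k * Av + Vf v k * Bw)) := by
      have step1 : (Real.sqrt L)⁻¹ * vnorm (fun i => |aa i| * |bb i| + |cc i|)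
          ≤ (Real.sqrt L)⁻¹ * (vnorm aa * vnorm bb + vnorm cc) :=
        mul_le_mul_of_nonneg_left hprod (by positivity)
      have step2 : (Real.sqrt L)⁻¹ * (vnorm aa * vnorm bb + vnorm cc)
          ≤ (Real.sqrt L)⁻¹ * ((Vf w k * Real.exp c + c * (Real.sqrt L)⁻¹ * Bw)
              * (Vf v k * Real.exp c + c * (Real.sqrt L)⁻¹ * Av)
            + (c * (Real.sqrt L)⁻¹ * vnorm (dp σ α v w x k) + (Vf w k * Av + Vf v k * Bw))) := by
        apply mul_le_mul_of_nonneg_left _ (by positivity)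
        linarith
      have step3 : (Real.sqrt L)⁻¹ * ((Vf w k * Real.exp c + c * (Real.sqrt L)⁻¹ * Bw)
              * (Vf v k * Real.exp c + c * (Real.sqrt L)⁻¹ * Av)
            + (c * (Real.sqrt L)⁻¹ * vnorm (dp σ α v w x k) + (Vf w k * Av + Vf v k * Bw)))
          = c / L * vnorm (dp σ α v w x k)
            + (Real.sqrt L)⁻¹ * ((Vf w k * Real.exp c + c * (Real.sqrt L)⁻¹ * Bw)
              * (Vf v k * Real.exp c + c * (Real.sqrt L)⁻¹ * Av) + (Vf w k * Av + Vf v k * Bw)) := by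
        rw [← hsplit]; ring
      linarith [step1, step2, step3.le, step3.ge]
    calc vnorm (dp σ α v w x (k+1))
        ≤ vnorm (dp σ α v w x k) + (Real.sqrt L)⁻¹ * vnorm (fun i => |aa i| * |bb i| + |cc i|) := e1
    _ ≤ (1 + c / L) * vnorm (dp σ α v w x k)
        + (Real.sqrt L)⁻¹ * ((Vf w k * Real.exp c + c * (Real.sqrt L)⁻¹ * Bw)
          * (Vf v k * Real.exp c + c * (Real.sqrt L)⁻¹ * Av) + (Vf w k * Av + Vf v k * Bw)) := by
        have := vnorm_nonneg (dp σ α v w x k)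
        nlinarith [hfin]

end Bounds3


section Bounds4
variable {d L : ℕ} {σ : ℝ → ℝ} {α v w : Fin L → Fin d → Fin d → ℝ} {x : Fin d → ℝ} {c : ℝ}

lemma vnorm_const {n : ℕ} (r : ℝ) : vnorm (fun _ : Fin n => r) = |r| * Real.sqrt n := by
  unfold vnorm
  rw [Finset.sum_const, Finset.card_univ, Fintype.card_fin, nsmul_eq_mul,
    Real.sqrt_mul (by positivity), Real.sqrt_sq_eq_abs]
  ring

lemma sum_range_Vf (v : Fin L → Fin d → Fin d → ℝ) :
    ∑ j ∈ Finset.range L, Vf v j = ∑ j : Fin L, frobNorm (v j) := by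
  rw [← Fin.sum_univ_eq_sum_range (fun j => Vf v j) L]
  exact Finset.sum_congr rfl fun j _ => by simp [Vf]

/-- Euclidean norm of the full direction vector. -/
def dirNorm {d L : ℕ} (v : Fin L → Fin d → Fin d → ℝ) : ℝ :=
  Real.sqrt (∑ k, ∑ m, ∑ n, v k m n ^ 2)

lemma dirNorm_nonneg (v : Fin L → Fin d → Fin d → ℝ) : 0 ≤ dirNorm v := Real.sqrt_nonneg _

lemma vnorm_frob (v : Fin L → Fin d → Fin d → ℝ) :
    vnorm (fun j : Fin L => frobNorm (v j)) = dirNorm v := by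
  unfold vnorm dirNorm frobNorm
  congr 1
  exact Finset.sum_congr rfl fun j _ => Real.sq_sqrt (by positivity)

lemma sum_frob_le (v : Fin L → Fin d → Fin d → ℝ) :
    ∑ j : Fin L, frobNorm (v j) ≤ Real.sqrt L * dirNorm v := by
  have h := abs_dot_le (fun _ : Fin L => (1:ℝ)) (fun j => frobNorm (v j))
  rw [vnorm_const, vnorm_frob] at h
  simp only [one_mul, abs_one] at h
  exact le_trans (le_abs_self _) (by simpa using h)

lemma frob_le_dirNorm (v : Fin L → Fin d → Fin d → ℝ) (j : Fin L) :
    frobNorm (v j) ≤ dirNorm v := by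
  unfold frobNorm dirNorm
  apply Real.sqrt_le_sqrt
  exact Finset.single_le_sum (f := fun k => ∑ m, ∑ n, v k m n ^ 2)
    (fun k _ => by positivity) (Finset.mem_univ j)

lemma du_unif (hL : 1 ≤ L) (hc : 0 ≤ c)
    (hσa : ∀ z, |σ z| ≤ |z|) (hσb : ∀ z, |deriv σ z| ≤ 1)
    (hα : ∀ k, frobNorm (α k) ≤ c * (Real.sqrt L)⁻¹) (hx : vnorm x ≤ 1) :
    ∀ k, k ≤ L → vnorm (du σ α v x k) ≤ Real.exp c ^ 2 * dirNorm v := by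
  have hL0 : (0:ℝ) < L := by exact_mod_cast hL
  have hsq : (0:ℝ) < Real.sqrt L := Real.sqrt_pos.mpr hL0
  have hec : (1:ℝ) ≤ Real.exp c := by rw [Real.one_le_exp_iff]; exact hc
  intro k hk
  have h1 := du_bound (v := v) hL hc hσa hσb hα hx k hk
  have h2 : ∑ j ∈ Finset.range k, Vf v j ≤ ∑ j ∈ Finset.range L, Vf v j := by
    apply Finset.sum_le_sum_of_subset_of_nonneg (Finset.range_subset_range.mpr hk)
    intro j _ _; exact Vf_nonneg v j
  have h3 : ∑ j ∈ Finset.range L, Vf v j ≤ Real.sqrt L * dirNorm v := by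
    rw [sum_range_Vf]; exact sum_frob_le v
  have hpow := one_add_div_pow_le c hc L hL hk
  have hS : 0 ≤ ∑ j ∈ Finset.range k, Vf v j := Finset.sum_nonneg fun j _ => Vf_nonneg v j
  calc vnorm (du σ α v x k)
      ≤ (1 + c / L) ^ k * Real.exp c * (Real.sqrt L)⁻¹ * ∑ j ∈ Finset.range k, Vf v j := h1
  _ = ((1 + c / L) ^ k * Real.exp c) * ((Real.sqrt L)⁻¹ * ∑ j ∈ Finset.range k, Vf v j) := by
      ring
  _ ≤ (Real.exp c * Real.exp c) * ((Real.sqrt L)⁻¹ * (Real.sqrt L * dirNorm v)) := by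
      have e1 : (1 + c / L) ^ k * Real.exp c ≤ Real.exp c * Real.exp c :=
        mul_le_mul_of_nonneg_right hpow (by positivity)
      have e2 : ∑ j ∈ Finset.range k, Vf v j ≤ Real.sqrt L * dirNorm v := le_trans h2 h3
      have e3 : (0:ℝ) ≤ (Real.sqrt L)⁻¹ := by positivity
      apply mul_le_mul e1 (mul_le_mul_of_nonneg_left e2 e3) (mul_nonneg e3 hS) (by positivity)
  _ = Real.exp c * Real.exp c * ((Real.sqrt L)⁻¹ * Real.sqrt L) * dirNorm v := by ring
  _ = Real.exp c ^ 2 * dirNorm v := by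
      rw [inv_mul_cancel₀ (ne_of_gt hsq)]
      ring

end Bounds4


section Bounds5
variable {d L : ℕ} {σ : ℝ → ℝ} {α v w : Fin L → Fin d → Fin d → ℝ} {x : Fin d → ℝ} {c : ℝ}

set_option maxHeartbeats 2000000 in
lemma dp_final (hL : 1 ≤ L) (hc : 0 ≤ c)
    (hσa : ∀ z, |σ z| ≤ |z|) (hσb : ∀ z, |deriv σ z| ≤ 1) (hσc : ∀ z, |deriv (deriv σ) z| ≤ 1)
    (hα : ∀ k, frobNorm (α k) ≤ c * (Real.sqrt L)⁻¹) (hx : vnorm x ≤ 1) :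
    vnorm (dp σ α v w x L) ≤ Real.exp c *
      ((Real.sqrt L)⁻¹ * (Real.exp c + c * Real.exp c ^ 2) ^ 2 + 2 * Real.exp c ^ 2)
      * (dirNorm v * dirNorm w) := by
  have hL0 : (0:ℝ) < L := by exact_mod_cast hL
  have hsq : (0:ℝ) < Real.sqrt L := Real.sqrt_pos.mpr hL0
  have hsqinv : (Real.sqrt L)⁻¹ * Real.sqrt L = 1 := inv_mul_cancel₀ (ne_of_gt hsq)
  have hec : (1:ℝ) ≤ Real.exp c := by rw [Real.one_le_exp_iff]; exact hc
  have hec0 : (0:ℝ) < Real.exp c := Real.exp_pos c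
  set ec := Real.exp c with hecdef
  set nv := dirNorm v with hnv
  set nw := dirNorm w with hnw
  have hnv0 : 0 ≤ nv := dirNorm_nonneg v
  have hnw0 : 0 ≤ nw := dirNorm_nonneg w
  set Av := ec ^ 2 * nv with hAv
  set Bw := ec ^ 2 * nw with hBw
  have hAv0 : 0 ≤ Av := by positivity
  have hBw0 : 0 ≤ Bw := by positivity
  have hU := du_unif (v := v) hL hc hσa hσb hα hx
  have hW := du_unif (v := w) hL hc hσa hσb hα hx
  have hmain := dp_bound (v := v) (w := w) hL hc hσa hσb hσc hα hx hAv0 hBw0 hU hW L le_rfl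
  -- bound the sum
  have hsum : ∑ j ∈ Finset.range L, ((Vf w j * ec + c * (Real.sqrt L)⁻¹ * Bw)
        * (Vf v j * ec + c * (Real.sqrt L)⁻¹ * Av) + (Vf w j * Av + Vf v j * Bw))
      ≤ ((ec + c * ec ^ 2) * nw) * ((ec + c * ec ^ 2) * nv)
        + (Av * (Real.sqrt L * nw) + Bw * (Real.sqrt L * nv)) := by
    have hconv : ∑ j ∈ Finset.range L, ((Vf w j * ec + c * (Real.sqrt L)⁻¹ * Bw)
          * (Vf v j * ec + c * (Real.sqrt L)⁻¹ * Av) + (Vf w j * Av + Vf v j * Bw))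
        = ∑ j : Fin L, ((frobNorm (w j) * ec + c * (Real.sqrt L)⁻¹ * Bw)
          * (frobNorm (v j) * ec + c * (Real.sqrt L)⁻¹ * Av)
          + (frobNorm (w j) * Av + frobNorm (v j) * Bw)) := by
      rw [← Fin.sum_univ_eq_sum_range]
      exact Finset.sum_congr rfl fun j _ => by simp [Vf]
    rw [hconv, Finset.sum_add_distrib]
    have hpart1 : ∑ j : Fin L, (frobNorm (w j) * ec + c * (Real.sqrt L)⁻¹ * Bw)
          * (frobNorm (v j) * ec + c * (Real.sqrt L)⁻¹ * Av)
        ≤ ((ec + c * ec ^ 2) * nw) * ((ec + c * ec ^ 2) * nv) := by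
      set A : Fin L → ℝ := fun j => frobNorm (w j) * ec + c * (Real.sqrt L)⁻¹ * Bw with hA
      set B : Fin L → ℝ := fun j => frobNorm (v j) * ec + c * (Real.sqrt L)⁻¹ * Av with hB
      have h1 : ∑ j, A j * B j ≤ vnorm A * vnorm B :=
        le_trans (le_abs_self _) (abs_dot_le A B)
      have hvA : vnorm A ≤ (ec + c * ec ^ 2) * nw := by
        calc vnorm A = vnorm (fun j : Fin L => ec * frobNorm (w j)
              + c * (Real.sqrt L)⁻¹ * Bw) := by
                rw [hA]; congr 1; funext j; ring
        _ ≤ vnorm (fun j : Fin L => ec * frobNorm (w j))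
              + vnorm (fun _ : Fin L => c * (Real.sqrt L)⁻¹ * Bw) := vnorm_add_le _ _
        _ = ec * nw + c * (Real.sqrt L)⁻¹ * Bw * Real.sqrt L := by
            rw [vnorm_const_mul, vnorm_frob, vnorm_const, abs_of_nonneg hec0.le,
              abs_of_nonneg (by positivity)]
        _ = (ec + c * ec ^ 2) * nw := by
            rw [hBw]
            rw [show c * (Real.sqrt L)⁻¹ * (ec ^ 2 * nw) * Real.sqrt L
                = c * ec ^ 2 * nw * ((Real.sqrt L)⁻¹ * Real.sqrt L) by ring, hsqinv]
            ring
      have hvB : vnorm B ≤ (ec + c * ec ^ 2) * nv := by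
        calc vnorm B = vnorm (fun j : Fin L => ec * frobNorm (v j)
              + c * (Real.sqrt L)⁻¹ * Av) := by
                rw [hB]; congr 1; funext j; ring
        _ ≤ vnorm (fun j : Fin L => ec * frobNorm (v j))
              + vnorm (fun _ : Fin L => c * (Real.sqrt L)⁻¹ * Av) := vnorm_add_le _ _
        _ = ec * nv + c * (Real.sqrt L)⁻¹ * Av * Real.sqrt L := by
            rw [vnorm_const_mul, vnorm_frob, vnorm_const, abs_of_nonneg hec0.le,
              abs_of_nonneg (by positivity)]
        _ = (ec + c * ec ^ 2) * nv := by
            rw [hAv]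
            rw [show c * (Real.sqrt L)⁻¹ * (ec ^ 2 * nv) * Real.sqrt L
                = c * ec ^ 2 * nv * ((Real.sqrt L)⁻¹ * Real.sqrt L) by ring, hsqinv]
            ring
      calc ∑ j, A j * B j ≤ vnorm A * vnorm B := h1
      _ ≤ ((ec + c * ec ^ 2) * nw) * ((ec + c * ec ^ 2) * nv) :=
          mul_le_mul hvA hvB (vnorm_nonneg _) (by positivity)
    have hpart2 : ∑ j : Fin L, (frobNorm (w j) * Av + frobNorm (v j) * Bw)
        ≤ Av * (Real.sqrt L * nw) + Bw * (Real.sqrt L * nv) := by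
      rw [Finset.sum_add_distrib]
      have h1 : ∑ j : Fin L, frobNorm (w j) * Av ≤ Av * (Real.sqrt L * nw) := by
        rw [← Finset.sum_mul]
        calc (∑ j : Fin L, frobNorm (w j)) * Av ≤ (Real.sqrt L * nw) * Av :=
            mul_le_mul_of_nonneg_right (sum_frob_le w) hAv0
        _ = Av * (Real.sqrt L * nw) := by ring
      have h2 : ∑ j : Fin L, frobNorm (v j) * Bw ≤ Bw * (Real.sqrt L * nv) := by
        rw [← Finset.sum_mul]
        calc (∑ j : Fin L, frobNorm (v j)) * Bw ≤ (Real.sqrt L * nv) * Bw :=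
            mul_le_mul_of_nonneg_right (sum_frob_le v) hBw0
        _ = Bw * (Real.sqrt L * nv) := by ring
      linarith
    linarith
  -- put it together
  have hnn : (0:ℝ) ≤ ∑ j ∈ Finset.range L, ((Vf w j * ec + c * (Real.sqrt L)⁻¹ * Bw)
        * (Vf v j * ec + c * (Real.sqrt L)⁻¹ * Av) + (Vf w j * Av + Vf v j * Bw)) := by
    apply Finset.sum_nonneg
    intro j _
    have r1 : 0 ≤ Vf w j := Vf_nonneg w j
    have r2 : 0 ≤ Vf v j := Vf_nonneg v j
    have r3 : (0:ℝ) ≤ (Real.sqrt L)⁻¹ := by positivity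
    have q1 : 0 ≤ Vf w j * ec + c * (Real.sqrt L)⁻¹ * Bw := by
      nlinarith [mul_nonneg r1 hec0.le, mul_nonneg (mul_nonneg hc r3) hBw0]
    have q2 : 0 ≤ Vf v j * ec + c * (Real.sqrt L)⁻¹ * Av := by
      nlinarith [mul_nonneg r2 hec0.le, mul_nonneg (mul_nonneg hc r3) hAv0]
    nlinarith [mul_nonneg q1 q2, mul_nonneg r1 hAv0, mul_nonneg r2 hBw0]
  have hpw := one_add_div_pow_le c hc L hL (le_refl L)
  calc vnorm (dp σ α v w x L)
      ≤ (1 + c / L) ^ L * (Real.sqrt L)⁻¹ * ∑ j ∈ Finset.range L,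
        ((Vf w j * ec + c * (Real.sqrt L)⁻¹ * Bw) * (Vf v j * ec + c * (Real.sqrt L)⁻¹ * Av)
          + (Vf w j * Av + Vf v j * Bw)) := hmain
  _ ≤ ec * (Real.sqrt L)⁻¹ * (((ec + c * ec ^ 2) * nw) * ((ec + c * ec ^ 2) * nv)
        + (Av * (Real.sqrt L * nw) + Bw * (Real.sqrt L * nv))) := by
      have e3 : (0:ℝ) ≤ (Real.sqrt L)⁻¹ := by positivity
      have t1 : (1 + c / L) ^ L * (Real.sqrt L)⁻¹ ≤ ec * (Real.sqrt L)⁻¹ :=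
        mul_le_mul_of_nonneg_right hpw e3
      have t0 : (0:ℝ) ≤ (1 + c / L) ^ L * (Real.sqrt L)⁻¹ := by positivity
      apply mul_le_mul t1 hsum hnn (by positivity)
  _ = ec * ((Real.sqrt L)⁻¹ * (ec + c * ec ^ 2) ^ 2 + 2 * ec ^ 2) * (nv * nw) := by
      rw [hAv, hBw]
      field_simp
      ring
  _ ≤ ec * ((Real.sqrt L)⁻¹ * (ec + c * ec ^ 2) ^ 2 + 2 * ec ^ 2) * (nv * nw) := le_refl _

end Bounds5

set_option maxHeartbeats 2000000 in
/-- **Upper bound on the Hessian of the loss (Lemma C.2).** The Hessian, as a symmetric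
bilinear form on the weight space, is bounded by `5 d e^{4.3 cα}` with respect to the
Euclidean norm on the weights, for all sufficiently large `L` (depending only on `cα`
and `d`). -/
theorem statement4 {d : ℕ} (hd : 1 ≤ d) (cα : ℝ) (hcα : 0 < cα) :
    ∃ L₀ : ℕ, ∀ N : ℕ, 1 ≤ N → ∀ σ : ℝ → ℝ, ActAssump σ →
      ∀ x y : Fin N → Fin d → ℝ,
        (∀ i, vnorm (x i) = 1) → (∀ i, vnorm (y i) = 1) →
      ∀ L : ℕ, L₀ ≤ L →
      ∀ α : Fin L → Fin d → Fin d → ℝ,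
        (∀ k, frobNorm (α k) ≤ cα * (Real.sqrt L)⁻¹) →
      ∀ v w : Fin L → Fin d → Fin d → ℝ,
        |fderiv ℝ (fun a => fderiv ℝ (loss σ x y) a v) α w|
          ≤ 5 * d * Real.exp (4.3 * cα)
            * Real.sqrt (∑ k, ∑ m, ∑ n, v k m n ^ 2)
            * Real.sqrt (∑ k, ∑ m, ∑ n, w k m n ^ 2) := by
  have hcnn : (0:ℝ) ≤ cα := le_of_lt hcα
  set ec := Real.exp cα with hec
  have hec1 : (1:ℝ) ≤ ec := by rw [hec, Real.one_le_exp_iff]; exact hcnn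
  have hec0 : (0:ℝ) < ec := lt_of_lt_of_le one_pos hec1
  set K := ec + cα * ec ^ 2 with hK
  set δ := (ec + 1) * ec * K ^ 2 with hδ
  set ε := 5 * (Real.exp (4.3 * cα) - Real.exp (4 * cα)) with hε
  have hεpos : 0 < ε := by
    rw [hε]
    have : Real.exp (4 * cα) < Real.exp (4.3 * cα) := by
      apply Real.exp_lt_exp.mpr
      nlinarith
    linarith
  have hδ0 : 0 ≤ δ := by
    have hK0 : 0 ≤ K := by rw [hK]; positivity
    rw [hδ]; positivity
  refine ⟨Nat.ceil ((δ / ε) ^ 2) + 1, ?_⟩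
  intro N hN σ hact x y hx hy L hL α hα v w
  obtain ⟨hσ2, hσ0, hσprop⟩ := hact
  have hσa : ∀ z, |σ z| ≤ |z| := fun z => (hσprop z).1
  have hσb : ∀ z, |deriv σ z| ≤ 1 := fun z => (hσprop z).2.1
  have hσc : ∀ z, |deriv (deriv σ) z| ≤ 1 := fun z => (hσprop z).2.2
  have hL1 : 1 ≤ L := by omega
  have hL0 : (0:ℝ) < L := by exact_mod_cast hL1
  have hsq : (0:ℝ) < Real.sqrt L := Real.sqrt_pos.mpr hL0
  -- √L is large enough
  have hsqrtL : δ * (Real.sqrt L)⁻¹ ≤ ε := by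
    have h1 : ((δ / ε) ^ 2 : ℝ) ≤ L := by
      calc ((δ / ε) ^ 2 : ℝ) ≤ (Nat.ceil ((δ / ε) ^ 2) : ℝ) := Nat.le_ceil _
      _ ≤ L := by
        have : Nat.ceil ((δ / ε) ^ 2) ≤ L := by omega
        exact_mod_cast this
    have h2 : δ / ε ≤ Real.sqrt L := by
      have := Real.sqrt_le_sqrt h1
      rw [Real.sqrt_sq_eq_abs] at this
      exact le_trans (le_abs_self _) this
    have h3 : δ ≤ ε * Real.sqrt L := by
      rw [div_le_iff₀ hεpos] at h2
      linarith
    calc δ * (Real.sqrt L)⁻¹ ≤ (ε * Real.sqrt L) * (Real.sqrt L)⁻¹ :=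
        mul_le_mul_of_nonneg_right h3 (by positivity)
    _ = ε * (Real.sqrt L * (Real.sqrt L)⁻¹) := by ring
    _ = ε := by rw [mul_inv_cancel₀ (ne_of_gt hsq), mul_one]
  rw [snd_fderiv_eq hσ2 x y α v w]
  set nv := dirNorm v with hnv
  set nw := dirNorm w with hnw
  have hnv0 : 0 ≤ nv := dirNorm_nonneg v
  have hnw0 : 0 ≤ nw := dirNorm_nonneg w
  set PL := ec * ((Real.sqrt L)⁻¹ * K ^ 2 + 2 * ec ^ 2) * (nv * nw) with hPL
  have hPL0 : 0 ≤ PL := by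
    have hK0 : 0 ≤ K := by rw [hK]; positivity
    rw [hPL]; positivity
  set Ci := (ec ^ 2 * nw) * (ec ^ 2 * nv) + (ec + 1) * PL with hCi
  have hCi0 : 0 ≤ Ci := by
    rw [hCi]; positivity
  -- per-sample bound
  have hper : ∀ i : Fin N,
      |∑ j, 2 * (du σ α w (x i) L j * du σ α v (x i) L j
        + (hiddenState σ α (x i) L j - y i j) * dp σ α v w (x i) L j)| ≤ 2 * Ci := by
    intro i
    have hxi : vnorm (x i) ≤ 1 := le_of_eq (hx i)
    have hAv : vnorm (du σ α v (x i) L) ≤ ec ^ 2 * nv :=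
      du_unif hL1 hcnn hσa hσb hα hxi L le_rfl
    have hBw : vnorm (du σ α w (x i) L) ≤ ec ^ 2 * nw :=
      du_unif hL1 hcnn hσa hσb hα hxi L le_rfl
    have hdp : vnorm (dp σ α v w (x i) L) ≤ PL := by
      rw [hPL]
      exact dp_final hL1 hcnn hσa hσb hσc hα hxi
    have hhy : vnorm (fun j => hiddenState σ α (x i) L j - y i j) ≤ ec + 1 := by
      have h1 : vnorm (hiddenState σ α (x i) L) ≤ ec :=
        (hs_bound hL1 hcnn hσa hα hxi L le_rfl).trans (one_add_div_pow_le cα hcnn L hL1 le_rfl)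
      calc vnorm (fun j => hiddenState σ α (x i) L j - y i j)
          = vnorm (fun j => hiddenState σ α (x i) L j + (-(y i j))) := by
            simp only [sub_eq_add_neg]
      _ ≤ vnorm (hiddenState σ α (x i) L) + vnorm (fun j => -(y i j)) :=
          vnorm_add_le _ _
      _ ≤ ec + 1 := by
          rw [vnorm_neg, hy i]
          linarith
    have hdot1 : |∑ j, du σ α w (x i) L j * du σ α v (x i) L j|
        ≤ (ec ^ 2 * nw) * (ec ^ 2 * nv) := by
      calc |∑ j, du σ α w (x i) L j * du σ α v (x i) L j|
          ≤ vnorm (du σ α w (x i) L) * vnorm (du σ α v (x i) L) := abs_dot_le _ _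
      _ ≤ (ec ^ 2 * nw) * (ec ^ 2 * nv) :=
          mul_le_mul hBw hAv (vnorm_nonneg _) (by positivity)
    have hdot2 : |∑ j, (hiddenState σ α (x i) L j - y i j) * dp σ α v w (x i) L j|
        ≤ (ec + 1) * PL := by
      calc |∑ j, (hiddenState σ α (x i) L j - y i j) * dp σ α v w (x i) L j|
          ≤ vnorm (fun j => hiddenState σ α (x i) L j - y i j) * vnorm (dp σ α v w (x i) L) :=
            abs_dot_le _ _
      _ ≤ (ec + 1) * PL :=
          mul_le_mul hhy hdp (vnorm_nonneg _) (by positivity)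
    have hsplit : ∑ j, 2 * (du σ α w (x i) L j * du σ α v (x i) L j
          + (hiddenState σ α (x i) L j - y i j) * dp σ α v w (x i) L j)
        = 2 * ((∑ j, du σ α w (x i) L j * du σ α v (x i) L j)
          + ∑ j, (hiddenState σ α (x i) L j - y i j) * dp σ α v w (x i) L j) := by
      rw [← Finset.sum_add_distrib, Finset.mul_sum]
    rw [hsplit, hCi]
    rw [abs_mul, abs_two]
    have := abs_add_le (∑ j, du σ α w (x i) L j * du σ α v (x i) L j)
      (∑ j, (hiddenState σ α (x i) L j - y i j) * dp σ α v w (x i) L j)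
    nlinarith [abs_nonneg (∑ j, du σ α w (x i) L j * du σ α v (x i) L j)]
  -- sum over samples
  have hH : |Hexpr σ x y α v w| ≤ Ci := by
    have hN0 : (0:ℝ) < N := by exact_mod_cast hN
    unfold Hexpr
    rw [abs_mul]
    have h1 : |(1:ℝ) / (2 * N)| = 1 / (2 * N) := abs_of_nonneg (by positivity)
    rw [h1]
    have h2 : |∑ i, ∑ j, 2 * (du σ α w (x i) L j * du σ α v (x i) L j
          + (hiddenState σ α (x i) L j - y i j) * dp σ α v w (x i) L j)|
        ≤ (N : ℝ) * (2 * Ci) := by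
      calc |∑ i, ∑ j, 2 * (du σ α w (x i) L j * du σ α v (x i) L j
            + (hiddenState σ α (x i) L j - y i j) * dp σ α v w (x i) L j)|
          ≤ ∑ i, |∑ j, 2 * (du σ α w (x i) L j * du σ α v (x i) L j
            + (hiddenState σ α (x i) L j - y i j) * dp σ α v w (x i) L j)| :=
            Finset.abs_sum_le_sum_abs _ _
      _ ≤ ∑ _i : Fin N, 2 * Ci := Finset.sum_le_sum fun i _ => hper i
      _ = (N : ℝ) * (2 * Ci) := by
          rw [Finset.sum_const, Finset.card_univ, Fintype.card_fin, nsmul_eq_mul]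
    calc 1 / (2 * (N:ℝ)) * |∑ i, ∑ j, 2 * (du σ α w (x i) L j * du σ α v (x i) L j
          + (hiddenState σ α (x i) L j - y i j) * dp σ α v w (x i) L j)|
        ≤ 1 / (2 * (N:ℝ)) * ((N : ℝ) * (2 * Ci)) := by
          apply mul_le_mul_of_nonneg_left h2 (by positivity)
    _ = Ci := by field_simp
  -- final numeric bound
  have hfinal : Ci ≤ 5 * d * Real.exp (4.3 * cα) * nv * nw := by
    have hd1 : (1:ℝ) ≤ d := by exact_mod_cast hd
    have hexp4 : Real.exp (4 * cα) = ec ^ 4 := by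
      rw [hec, show (4:ℝ) * cα = cα + cα + cα + cα by ring,
        Real.exp_add, Real.exp_add, Real.exp_add]
      ring
    have hδL : (ec + 1) * ec * ((Real.sqrt L)⁻¹ * K ^ 2) ≤ ε := by
      have h0 : (ec + 1) * ec * ((Real.sqrt L)⁻¹ * K ^ 2) = δ * (Real.sqrt L)⁻¹ := by
        rw [hδ]; ring
      rw [h0]; exact hsqrtL
    have hCi_expand : Ci = (ec ^ 4 + (ec + 1) * ec * ((Real.sqrt L)⁻¹ * K ^ 2)
        + 2 * ec ^ 3 * (ec + 1)) * (nv * nw) := by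
      rw [hCi, hPL]; ring
    have hcoef : ec ^ 4 + (ec + 1) * ec * ((Real.sqrt L)⁻¹ * K ^ 2)
        + 2 * ec ^ 3 * (ec + 1) ≤ 5 * Real.exp (4.3 * cα) := by
      have h1 : 2 * ec ^ 3 * (ec + 1) = 2 * ec ^ 4 + 2 * ec ^ 3 := by ring
      have h2 : ec ^ 3 ≤ ec ^ 4 := by
        nlinarith [mul_nonneg (pow_nonneg hec0.le 3) (sub_nonneg.mpr hec1)]
      have h3 : ec ^ 4 + (ec + 1) * ec * ((Real.sqrt L)⁻¹ * K ^ 2) + 2 * ec ^ 3 * (ec + 1)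
          ≤ 5 * ec ^ 4 + ε := by nlinarith [hδL]
      have h4 : 5 * ec ^ 4 + ε = 5 * Real.exp (4.3 * cα) := by
        rw [hε, ← hexp4]; ring
      linarith
    calc Ci = (ec ^ 4 + (ec + 1) * ec * ((Real.sqrt L)⁻¹ * K ^ 2)
        + 2 * ec ^ 3 * (ec + 1)) * (nv * nw) := hCi_expand
    _ ≤ (5 * Real.exp (4.3 * cα)) * (nv * nw) :=
        mul_le_mul_of_nonneg_right hcoef (by positivity)
    _ ≤ (5 * d * Real.exp (4.3 * cα)) * (nv * nw) := by
        have hE : (0:ℝ) < Real.exp (4.3 * cα) := Real.exp_pos _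
        have : (5:ℝ) * Real.exp (4.3 * cα) ≤ 5 * d * Real.exp (4.3 * cα) := by
          nlinarith
        nlinarith [mul_nonneg hnv0 hnw0]
    _ = 5 * d * Real.exp (4.3 * cα) * nv * nw := by ring
  calc |Hexpr σ x y α v w| ≤ Ci := hH
  _ ≤ 5 * d * Real.exp (4.3 * cα) * nv * nw := hfinal
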